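/- (Perturbed output with Gaussian perturbation, deterministic core) Suppose each layer of a d-layer ReLU network has spectral norm ‖W_i‖₂ = β, and suppose the perturbation matrices satisfy ‖U_i‖₂ ≤ σ√(2h ln(4dh)) ≤ β/d for all i. Then for all x with |x|₂ ≤ B, |f_{w+u}(x) − f_w(x)|₂ ≤ e·d·B·β^{d−1}·σ·√(2h ln(4dh)). -/

import Mathlib

/-- Coordinatewise ReLU on vectors. -/
noncomputable def reluV {n : ℕ} (v : EuclideanSpace ℝ (Fin n)) :
    EuclideanSpace ℝ (Fin n) := WithLp.toLp 2 (fun i => max (v i) 0)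

/-- `net W i x` is the output f^i(x) of layer `i` before activation (layers are
    indexed 1,…,d): f¹(x) = W₁ x, f^{i+1}(x) = W_{i+1} φ(f^i(x)); `net W 0 x = x`. -/
noncomputable def net {n : ℕ}
    (W : ℕ → EuclideanSpace ℝ (Fin n) →L[ℝ] EuclideanSpace ℝ (Fin n)) :
    ℕ → EuclideanSpace ℝ (Fin n) → EuclideanSpace ℝ (Fin n)
  | 0, x => x
  | 1, x => W 1 x
  | (i + 2), x => W (i + 2) (reluV (net W (i + 1) x))

lemma reluV_lipschitz {n : ℕ} (v w : EuclideanSpace ℝ (Fin n)) :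
    ‖reluV v - reluV w‖ ≤ ‖v - w‖ := by
  rw [EuclideanSpace.norm_eq, EuclideanSpace.norm_eq]
  apply Real.sqrt_le_sqrt
  apply Finset.sum_le_sum
  intro i _
  have h1 : |(reluV v - reluV w) i| ≤ |(v - w) i| := by
    simp only [PiLp.sub_apply, reluV, PiLp.toLp_apply]
    exact abs_max_sub_max_le_abs _ _ _
  simp only [Real.norm_eq_abs]
  exact pow_le_pow_left₀ (abs_nonneg _) h1 2

lemma reluV_zero {n : ℕ} : reluV (0 : EuclideanSpace ℝ (Fin n)) = 0 := by
  ext i; simp [reluV]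

lemma reluV_norm_le {n : ℕ} (v : EuclideanSpace ℝ (Fin n)) : ‖reluV v‖ ≤ ‖v‖ := by
  have := reluV_lipschitz v (0 : EuclideanSpace ℝ (Fin n))
  simpa [reluV_zero] using this

/-- Perturbed output with Gaussian perturbation, deterministic core:
    if each layer has spectral norm ‖W_i‖₂ = β and the perturbations satisfy
    ‖U_i‖₂ ≤ σ√(2h ln(4dh)) ≤ β/d, then for |x|₂ ≤ B,
    |f_{w+u}(x) − f_w(x)|₂ ≤ e·d·B·β^{d−1}·σ·√(2h ln(4dh)). -/
theorem perturbed_output_gaussian_core (n d h : ℕ) (hd : 1 ≤ d) (hh : 1 ≤ h)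
    (B σ β : ℝ) (hB : 0 < B) (hσ : 0 < σ) (hβ : 0 < β)
    (W U : ℕ → EuclideanSpace ℝ (Fin n) →L[ℝ] EuclideanSpace ℝ (Fin n))
    (hW : ∀ i ∈ Finset.Icc 1 d, ‖W i‖ = β)
    (hU : ∀ i ∈ Finset.Icc 1 d,
      ‖U i‖ ≤ σ * Real.sqrt (2 * h * Real.log (4 * d * h)))
    (hgrid : σ * Real.sqrt (2 * h * Real.log (4 * d * h)) ≤ β / d)
    (x : EuclideanSpace ℝ (Fin n)) (hx : ‖x‖ ≤ B) :
    ‖net (fun i => W i + U i) d x - net W d x‖ ≤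
      Real.exp 1 * d * B * β ^ (d - 1) * σ *
        Real.sqrt (2 * h * Real.log (4 * d * h)) := by
  set s := σ * Real.sqrt (2 * h * Real.log (4 * d * h)) with hs_def
  have hs0 : 0 ≤ s := mul_nonneg hσ.le (Real.sqrt_nonneg _)
  have hβs : (0:ℝ) ≤ β + s := by positivity
  set V : ℕ → EuclideanSpace ℝ (Fin n) →L[ℝ] EuclideanSpace ℝ (Fin n) :=
    fun i => W i + U i with hV_def
  have hVnorm : ∀ i ∈ Finset.Icc 1 d, ‖V i‖ ≤ β + s := by
    intro i hi
    exact le_trans (norm_add_le _ _) (add_le_add (hW i hi).le (hU i hi))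
  -- main induction
  have key : ∀ k, 1 ≤ k → k ≤ d →
      ‖net V k x‖ ≤ (β + s) ^ k * B ∧
      ‖net V k x - net W k x‖ ≤ k * s * B * (β + s) ^ (k - 1) := by
    intro k hk
    induction k, hk using Nat.le_induction with
    | base =>
      intro h1d
      have hmem : (1:ℕ) ∈ Finset.Icc 1 d := by simp [h1d]
      constructor
      · calc ‖net V 1 x‖ = ‖V 1 x‖ := rfl
          _ ≤ ‖V 1‖ * ‖x‖ := (V 1).le_opNorm x
          _ ≤ (β + s) * B := by
              apply mul_le_mul (hVnorm 1 hmem) hx (norm_nonneg _) hβs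
          _ = (β + s) ^ 1 * B := by ring
      · have : net V 1 x - net W 1 x = U 1 x := by
          show (W 1 + U 1) x - W 1 x = U 1 x
          simp
        rw [this]
        calc ‖U 1 x‖ ≤ ‖U 1‖ * ‖x‖ := (U 1).le_opNorm x
          _ ≤ s * B := by
              apply mul_le_mul (hU 1 hmem) hx (norm_nonneg _) hs0
          _ = (1:ℕ) * s * B * (β + s) ^ (1 - 1) := by norm_num
    | succ k hk ih =>
      intro hkd
      have hkd' : k ≤ d := le_trans (Nat.le_succ k) hkd
      obtain ⟨hA, hD⟩ := ih hkd'
      have hmem : k + 1 ∈ Finset.Icc 1 d := by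
        simp [Nat.succ_le_succ (Nat.zero_le k), hkd]
      obtain ⟨m, rfl⟩ := Nat.exists_eq_add_of_le hk
      have hnetV : net V (1 + m + 1) x = V (m + 2) (reluV (net V (m + 1) x)) := by
        have : 1 + m + 1 = m + 2 := by omega
        rw [this]; rfl
      have hnetW : net W (1 + m + 1) x = W (m + 2) (reluV (net W (m + 1) x)) := by
        have : 1 + m + 1 = m + 2 := by omega
        rw [this]; rfl
      have h1m : (1 + m : ℕ) = m + 1 := by omega
      rw [h1m] at hA hD
      push_cast at hD
      have hmem2 : m + 2 ∈ Finset.Icc 1 d := by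
        have : 1 + m + 1 = m + 2 := by omega
        rwa [this] at hmem
      have hreluA : ‖reluV (net V (m + 1) x)‖ ≤ (β + s) ^ (m + 1) * B :=
        le_trans (reluV_norm_le _) hA
      constructor
      · rw [hnetV]
        calc ‖V (m + 2) (reluV (net V (m + 1) x))‖
            ≤ ‖V (m + 2)‖ * ‖reluV (net V (m + 1) x)‖ := (V (m+2)).le_opNorm _
          _ ≤ (β + s) * ((β + s) ^ (m + 1) * B) := by
              apply mul_le_mul (hVnorm _ hmem2) hreluA (norm_nonneg _) hβs
          _ = (β + s) ^ (1 + m + 1) * B := by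
              rw [show 1 + m + 1 = m + 2 by omega]; ring
      · rw [hnetV, hnetW]
        have hsplit : V (m + 2) (reluV (net V (m + 1) x)) -
            W (m + 2) (reluV (net W (m + 1) x)) =
            W (m + 2) (reluV (net V (m + 1) x) - reluV (net W (m + 1) x)) +
            U (m + 2) (reluV (net V (m + 1) x)) := by
          simp [hV_def, map_sub]
          abel
        rw [hsplit]
        have hUm : ‖U (m + 2)‖ ≤ s := hU _ hmem2
        have hWm : ‖W (m + 2)‖ = β := hW _ hmem2
        have hlip : ‖reluV (net V (m + 1) x) - reluV (net W (m + 1) x)‖ ≤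
            ‖net V (m + 1) x - net W (m + 1) x‖ := reluV_lipschitz _ _
        have hkm1 : ((m + 1 : ℕ) : ℝ) = (m : ℝ) + 1 := by push_cast; ring
        calc ‖W (m + 2) (reluV (net V (m + 1) x) - reluV (net W (m + 1) x)) +
              U (m + 2) (reluV (net V (m + 1) x))‖
            ≤ ‖W (m + 2) (reluV (net V (m + 1) x) - reluV (net W (m + 1) x))‖ +
              ‖U (m + 2) (reluV (net V (m + 1) x))‖ := norm_add_le _ _
          _ ≤ β * ((m + 1) * s * B * (β + s) ^ (m + 1 - 1)) + s * ((β + s) ^ (m + 1) * B) := by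
              apply add_le_add
              · calc ‖W (m + 2) (reluV (net V (m + 1) x) - reluV (net W (m + 1) x))‖
                    ≤ ‖W (m + 2)‖ * ‖reluV (net V (m + 1) x) - reluV (net W (m + 1) x)‖ :=
                      (W (m+2)).le_opNorm _
                  _ ≤ β * ((m + 1) * s * B * (β + s) ^ (m + 1 - 1)) := by
                      rw [hWm]
                      apply mul_le_mul_of_nonneg_left (le_trans hlip hD) hβ.le
              · calc ‖U (m + 2) (reluV (net V (m + 1) x))‖
                    ≤ ‖U (m + 2)‖ * ‖reluV (net V (m + 1) x)‖ := (U (m+2)).le_opNorm _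
                  _ ≤ s * ((β + s) ^ (m + 1) * B) := by
                      apply mul_le_mul hUm hreluA (norm_nonneg _) hs0
          _ ≤ (β + s) * ((m + 1) * s * B * (β + s) ^ m) + s * ((β + s) ^ (m + 1) * B) := by
              simp only [Nat.add_sub_cancel]
              apply add_le_add_left
              apply mul_le_mul_of_nonneg_right (by linarith) (by positivity)
          _ = ((1 + m + 1 : ℕ) : ℝ) * s * B * (β + s) ^ (1 + m + 1 - 1) := by
              have : (1 + m + 1 - 1 : ℕ) = m + 1 := by omega
              rw [this]
              push_cast
              ring
  obtain ⟨-, hfinal⟩ := key d hd le_rfl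
  -- now bound (β+s)^(d-1) ≤ exp 1 * β^(d-1)
  have hd0 : (0:ℝ) < d := by exact_mod_cast hd
  have hβs_le : β + s ≤ β * Real.exp (1 / d) := by
    have h1 : β + s ≤ β * (1 + 1 / d) := by
      rw [mul_add, mul_one, mul_one_div]
      linarith [hgrid]
    have h2 : (1 : ℝ) + 1 / d ≤ Real.exp (1 / d) := by
      have := Real.add_one_le_exp (1 / (d:ℝ))
      linarith
    calc β + s ≤ β * (1 + 1 / d) := h1
      _ ≤ β * Real.exp (1 / d) := by
          apply mul_le_mul_of_nonneg_left h2 hβ.le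
  have hpow : (β + s) ^ (d - 1) ≤ β ^ (d - 1) * Real.exp 1 := by
    calc (β + s) ^ (d - 1) ≤ (β * Real.exp (1 / d)) ^ (d - 1) :=
          pow_le_pow_left₀ hβs hβs_le _
      _ = β ^ (d - 1) * Real.exp (1 / d) ^ (d - 1) := mul_pow _ _ _
      _ ≤ β ^ (d - 1) * Real.exp 1 := by
          apply mul_le_mul_of_nonneg_left _ (by positivity)
          rw [← Real.exp_nat_mul]
          apply Real.exp_le_exp.mpr
          rw [mul_one_div]
          apply div_le_one_of_le₀ _ hd0.le
          exact_mod_cast Nat.sub_le d 1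
  calc ‖net V d x - net W d x‖ ≤ d * s * B * (β + s) ^ (d - 1) := hfinal
    _ ≤ d * s * B * (β ^ (d - 1) * Real.exp 1) := by
        apply mul_le_mul_of_nonneg_left hpow (by positivity)
    _ = Real.exp 1 * d * B * β ^ (d - 1) * σ * Real.sqrt (2 * h * Real.log (4 * d * h)) := by
        rw [hs_def]; ring
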